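/- Partition' is equivalent to Partition under the following reduction: given positive integers k_1, ..., k_t with sum 2K, define k'_i = 4^i + 4^{t+1} * k_i, ℓ'_i = 4^i for 1 ≤ i ≤ t, and K̂ = 4^{t+1} * K + Σ_{i=1}^{t} 4^i. Then there exists a partition of the multiset {k'_1,...,k'_t, ℓ'_1,...,ℓ'_t} into three parts (A, B, C) with Σ A = Σ B + K̂ if and only if there exists a subset D of {k_1,...,k_t} (as a multiset of indices) with Σ_{i ∈ D} k_i = K. -/
import Mathlib

open Finset

/-- Bound on a base-4 digit expansion. -/
lemma part_red_sum_lt (t : ℕ) (c : ℕ → ℕ) (hc : ∀ n, c n ≤ 3) :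
    ∑ n ∈ Finset.range t, 4 ^ n * c n < 4 ^ t := by
  induction t with
  | zero => simp
  | succ t ih =>
      rw [Finset.sum_range_succ]
      have h1 : 4 ^ t * c t ≤ 4 ^ t * 3 := Nat.mul_le_mul_left _ (hc t)
      have : (4:ℕ) ^ (t+1) = 4 ^ t * 4 := by ring
      omega

/-- Uniqueness of base-4 digits. -/
lemma part_red_digits_eq (t : ℕ) (a b : ℕ → ℕ) (ha : ∀ n, a n ≤ 3) (hb : ∀ n, b n ≤ 3)
    (h : ∑ n ∈ Finset.range t, 4 ^ n * a n = ∑ n ∈ Finset.range t, 4 ^ n * b n) :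
    ∀ n < t, a n = b n := by
  induction t generalizing a b with
  | zero => omega
  | succ t ih =>
      rw [Finset.sum_range_succ'] at h
      rw [Finset.sum_range_succ'] at h
      have ea : ∑ n ∈ Finset.range t, 4 ^ (n+1) * a (n+1)
          = 4 * ∑ n ∈ Finset.range t, 4 ^ n * a (n+1) := by
        rw [Finset.mul_sum]; apply Finset.sum_congr rfl; intro n _; ring
      have eb : ∑ n ∈ Finset.range t, 4 ^ (n+1) * b (n+1)
          = 4 * ∑ n ∈ Finset.range t, 4 ^ n * b (n+1) := by
        rw [Finset.mul_sum]; apply Finset.sum_congr rfl; intro n _; ring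
      rw [ea, eb] at h
      simp only [pow_zero, one_mul] at h
      have h0 : a 0 = b 0 := by have := ha 0; have := hb 0; omega
      have hs : ∑ n ∈ Finset.range t, 4 ^ n * a (n+1)
          = ∑ n ∈ Finset.range t, 4 ^ n * b (n+1) := by omega
      have := ih (fun n => a (n+1)) (fun n => b (n+1)) (fun n => ha (n+1)) (fun n => hb (n+1)) hs
      intro n hn
      cases n with
      | zero => exact h0
      | succ n => exact this n (by omega)

lemma part_red_split (M LA LB SA SB : ℕ) (hLA : LA < M) (hLB : LB < M)
    (h : LA + M * SA = LB + M * SB) : LA = LB ∧ SA = SB := by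
  have hM : 0 < M := by omega
  have h1 : (LA + M * SA) % M = LA := by
    rw [Nat.add_mul_mod_self_left, Nat.mod_eq_of_lt hLA]
  have h2 : (LB + M * SB) % M = LB := by
    rw [Nat.add_mul_mod_self_left, Nat.mod_eq_of_lt hLB]
  have hL : LA = LB := by rw [← h1, h, h2]
  have : M * SA = M * SB := by omega
  exact ⟨hL, Nat.eq_of_mul_eq_mul_left hM this⟩

lemma part_red_fin_to_range (t : ℕ) (g : Fin t → ℕ) :
    ∑ i : Fin t, g i = ∑ n ∈ Finset.range t, (if h : n < t then g ⟨n, h⟩ else 0) := by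
  rw [← Fin.sum_univ_eq_sum_range (fun n => if h : n < t then g ⟨n, h⟩ else 0) t]
  apply Finset.sum_congr rfl
  intro i _
  rw [dif_pos i.isLt]

lemma part_red_key (t : ℕ) (k : Fin t → ℕ) (val : Fin t ⊕ Fin t → ℕ)
    (hval : ∀ i : Fin t, val (Sum.inl i) = 4 ^ ((i : ℕ) + 1) + 4 ^ (t + 1) * k i)
    (hval' : ∀ i : Fin t, val (Sum.inr i) = 4 ^ ((i : ℕ) + 1))
    (f : Fin t ⊕ Fin t → Fin 3) (c : Fin 3) :
    ∑ x ∈ Finset.univ.filter (fun x => f x = c), val x =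
      (∑ i : Fin t, 4 ^ ((i : ℕ) + 1) *
        ((if f (Sum.inl i) = c then 1 else 0) + (if f (Sum.inr i) = c then 1 else 0)))
      + 4 ^ (t + 1) * ∑ i : Fin t, (if f (Sum.inl i) = c then k i else 0) := by
  rw [Finset.sum_filter, Fintype.sum_sum_type]
  have h1 : ∀ i : Fin t, (if f (Sum.inl i) = c then val (Sum.inl i) else 0)
      = 4 ^ ((i : ℕ) + 1) * (if f (Sum.inl i) = c then 1 else 0)
        + 4 ^ (t + 1) * (if f (Sum.inl i) = c then k i else 0) := by
    intro i; split_ifs <;> simp [hval]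
  have h2 : ∀ i : Fin t, (if f (Sum.inr i) = c then val (Sum.inr i) else 0)
      = 4 ^ ((i : ℕ) + 1) * (if f (Sum.inr i) = c then 1 else 0) := by
    intro i; split_ifs <;> simp [hval']
  simp_rw [h1, h2, mul_add, Finset.sum_add_distrib, Finset.mul_sum]
  ring

/-- Correctness of the reduction from Partition to Partition':
given positive integers `k 1, ..., k t` summing to `2*K`, with
`k' i = 4^i + 4^(t+1) * k i`, `ℓ' i = 4^i`, and
`K̂ = 4^(t+1)*K + ∑ i, 4^i`, the `2t` numbers `k' i, ℓ' i` admit a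
three-way partition `(A,B,C)` with `∑ A = ∑ B + K̂` iff some subset of the
`k i` sums to `K`. -/
theorem partition'_reduction_correct
    (t K : ℕ) (k : Fin t → ℕ) (hk : ∀ i, 0 < k i)
    (hsum : ∑ i, k i = 2 * K)
    (val : Fin t ⊕ Fin t → ℕ)
    (hval : ∀ i : Fin t, val (Sum.inl i) = 4 ^ ((i : ℕ) + 1) + 4 ^ (t + 1) * k i)
    (hval' : ∀ i : Fin t, val (Sum.inr i) = 4 ^ ((i : ℕ) + 1))
    (Khat : ℕ)
    (hKhat : Khat = 4 ^ (t + 1) * K + ∑ i : Fin t, 4 ^ ((i : ℕ) + 1)) :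
    (∃ f : Fin t ⊕ Fin t → Fin 3,
        ∑ x ∈ Finset.univ.filter (fun x => f x = 0), val x =
          (∑ x ∈ Finset.univ.filter (fun x => f x = 1), val x) + Khat) ↔
      (∃ D : Finset (Fin t), ∑ i ∈ D, k i = K) := by
  constructor
  · rintro ⟨f, hf⟩
    rw [part_red_key t k val hval hval' f 0, part_red_key t k val hval hval' f 1, hKhat] at hf
    -- digit functions on ℕ
    set dA : ℕ → ℕ := fun n => if h : n < t then
        ((if f (Sum.inl ⟨n, h⟩) = 0 then 1 else 0) + (if f (Sum.inr ⟨n, h⟩) = 0 then 1 else 0))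
      else 0 with hdA
    set dB : ℕ → ℕ := fun n => if h : n < t then
        ((if f (Sum.inl ⟨n, h⟩) = 1 then 1 else 0) + (if f (Sum.inr ⟨n, h⟩) = 1 then 1 else 0)) + 1
      else 0 with hdB
    have hdAle : ∀ n, dA n ≤ 3 := by
      intro n; rw [hdA]; dsimp only; split_ifs <;> omega
    have hdBle : ∀ n, dB n ≤ 3 := by
      intro n; rw [hdB]; dsimp only; split_ifs <;> omega
    -- rewrite the digit sums as range sums
    have eA : (∑ i : Fin t, 4 ^ ((i : ℕ) + 1) *
        ((if f (Sum.inl i) = 0 then 1 else 0) + (if f (Sum.inr i) = 0 then 1 else 0)))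
        = 4 * ∑ n ∈ Finset.range t, 4 ^ n * dA n := by
      rw [part_red_fin_to_range t (fun i => 4 ^ ((i : ℕ) + 1) *
        ((if f (Sum.inl i) = 0 then 1 else 0) + (if f (Sum.inr i) = 0 then 1 else 0))),
        Finset.mul_sum]
      apply Finset.sum_congr rfl
      intro n hn
      rw [Finset.mem_range] at hn
      rw [dif_pos hn, hdA]
      dsimp only
      rw [dif_pos hn]
      ring
    have eB : (∑ i : Fin t, 4 ^ ((i : ℕ) + 1) *
        ((if f (Sum.inl i) = 1 then 1 else 0) + (if f (Sum.inr i) = 1 then 1 else 0)))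
        + ∑ i : Fin t, 4 ^ ((i : ℕ) + 1)
        = 4 * ∑ n ∈ Finset.range t, 4 ^ n * dB n := by
      rw [part_red_fin_to_range t (fun i => 4 ^ ((i : ℕ) + 1) *
        ((if f (Sum.inl i) = 1 then 1 else 0) + (if f (Sum.inr i) = 1 then 1 else 0))),
        part_red_fin_to_range t (fun i => 4 ^ ((i : ℕ) + 1)),
        Finset.mul_sum, ← Finset.sum_add_distrib]
      apply Finset.sum_congr rfl
      intro n hn
      rw [Finset.mem_range] at hn
      rw [dif_pos hn, dif_pos hn, hdB]
      dsimp only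
      rw [dif_pos hn]
      ring
    set sA := ∑ i : Fin t, (if f (Sum.inl i) = 0 then k i else 0) with hsA
    set sB := ∑ i : Fin t, (if f (Sum.inl i) = 1 then k i else 0) with hsB
    have hf' : (4 * ∑ n ∈ Finset.range t, 4 ^ n * dA n) + 4 ^ (t + 1) * sA
        = (4 * ∑ n ∈ Finset.range t, 4 ^ n * dB n) + 4 ^ (t + 1) * (sB + K) := by
      rw [← eA, ← eB]
      rw [mul_add]
      omega
    have bndA : 4 * ∑ n ∈ Finset.range t, 4 ^ n * dA n < 4 ^ (t + 1) := by
      have := part_red_sum_lt t dA hdAle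
      have : (4:ℕ) ^ (t + 1) = 4 * 4 ^ t := by ring
      have h4 := part_red_sum_lt t dA hdAle
      omega
    have bndB : 4 * ∑ n ∈ Finset.range t, 4 ^ n * dB n < 4 ^ (t + 1) := by
      have : (4:ℕ) ^ (t + 1) = 4 * 4 ^ t := by ring
      have h4 := part_red_sum_lt t dB hdBle
      omega
    obtain ⟨hL, hS⟩ := part_red_split (4 ^ (t + 1)) _ _ _ _ bndA bndB hf'
    -- digits agree
    have hdig : ∀ n < t, dA n = dB n := by
      apply part_red_digits_eq t dA dB hdAle hdBle
      omega
    -- sB = 0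
    have hB0 : sB = 0 := by
      rw [hsB]
      apply Finset.sum_eq_zero
      intro i _
      have hd := hdig (i : ℕ) i.isLt
      rw [hdA, hdB] at hd
      dsimp only at hd
      rw [dif_pos i.isLt, dif_pos i.isLt, Fin.eta] at hd
      by_cases h1 : f (Sum.inl i) = 1
      · exfalso
        have h0 : ¬ (f (Sum.inl i) = 0) := by rw [h1]; decide
        rw [if_neg h0, if_pos h1] at hd
        split_ifs at hd with hx hy hy
        · exact absurd (hx ▸ hy) (by decide)
        · omega
        · omega
        · omega
      · rw [if_neg h1]
    refine ⟨Finset.univ.filter (fun i => f (Sum.inl i) = 0), ?_⟩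
    rw [Finset.sum_filter, ← hsA]
    omega
  · rintro ⟨D, hD⟩
    refine ⟨fun x => match x with
      | Sum.inl i => if i ∈ D then 0 else 2
      | Sum.inr i => if i ∈ D then 2 else 0, ?_⟩
    set g : Fin t ⊕ Fin t → Fin 3 := fun x => match x with
      | Sum.inl i => if i ∈ D then 0 else 2
      | Sum.inr i => if i ∈ D then 2 else 0 with hg
    rw [part_red_key t k val hval hval' g 0, part_red_key t k val hval hval' g 1]
    have e1 : ∀ i : Fin t, (if g (Sum.inl i) = 1 then (1:ℕ) else 0) = 0 := by
      intro i; rw [hg]; dsimp only; by_cases h : i ∈ D <;> simp [h]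
    have e2 : ∀ i : Fin t, (if g (Sum.inr i) = 1 then (1:ℕ) else 0) = 0 := by
      intro i; rw [hg]; dsimp only; by_cases h : i ∈ D <;> simp [h]
    have e3 : ∀ i : Fin t, (if g (Sum.inl i) = 1 then k i else 0) = 0 := by
      intro i; rw [hg]; dsimp only; by_cases h : i ∈ D <;> simp [h]
    have e4 : ∀ i : Fin t,
        ((if g (Sum.inl i) = 0 then (1:ℕ) else 0) + (if g (Sum.inr i) = 0 then 1 else 0)) = 1 := by
      intro i; rw [hg]; dsimp only
      by_cases h : i ∈ D <;> simp [h]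
    have e5 : ∀ i : Fin t, (if g (Sum.inl i) = 0 then k i else 0) = (if i ∈ D then k i else 0) := by
      intro i; rw [hg]; dsimp only
      by_cases h : i ∈ D <;> simp [h]
    simp_rw [e1, e2, e3, e4, e5]
    rw [← Finset.sum_filter, Finset.filter_mem_eq_inter, Finset.univ_inter, hD, hKhat]
    simp [add_comm]
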